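/- Let X_1,...,X_n be i.i.d. random variables on an interval [a,b] with a < b, with a density f satisfying f(u) >= c > 0 for all u in [a,b]. Then E|1/(bar X - mu)| = infinity, where bar X is the sample mean and mu = E(X_1). -/

import Mathlib

open MeasureTheory Set ProbabilityTheory
open scoped ENNReal

/-- `1/(x-p)` is not (Lebesgue-)integrable over `[a,b]` if `p ∈ [a,b]`, `a < b`. -/
lemma aux_lintegral_sub_inv_top {a b p : ℝ} (hab : a < b) (hp : p ∈ Icc a b) :
    ∫⁻ x in Icc a b, ENNReal.ofReal |1 / (x - p)| ∂(volume : Measure ℝ) = ⊤ := by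
  by_contra h
  have hmeas : Measurable fun x : ℝ => (x - p)⁻¹ := (measurable_id.sub_const p).inv
  have hint : IntegrableOn (fun x => (x - p)⁻¹) (Icc a b) volume := by
    refine ⟨hmeas.aestronglyMeasurable.restrict, ?_⟩
    rw [hasFiniteIntegral_iff_norm]
    have : ∀ x : ℝ, ENNReal.ofReal ‖(x - p)⁻¹‖ = ENNReal.ofReal |1 / (x - p)| := by
      intro x; rw [Real.norm_eq_abs, one_div]
    simp_rw [this]
    exact lt_top_iff_ne_top.2 h
  have hii : IntervalIntegrable (fun x => (x - p)⁻¹) volume a b := by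
    rw [intervalIntegrable_iff_integrableOn_Ioc_of_le hab.le]
    exact hint.mono_set Ioc_subset_Icc_self
  rcases intervalIntegrable_sub_inv_iff.1 hii with h' | h'
  · exact hab.ne h'
  · exact h' (by rwa [uIcc_of_le hab.le])

lemma aux_abs_one_div_le {z m : ℝ} (hm : 1 ≤ m) : |1 / z| ≤ |m / z| := by
  rw [div_eq_mul_inv, div_eq_mul_inv, abs_mul, abs_mul]
  refine mul_le_mul_of_nonneg_right ?_ (abs_nonneg _)
  rw [abs_one, abs_of_nonneg (by linarith : (0:ℝ) ≤ m)]
  exact hm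

set_option maxHeartbeats 1000000
/-- If X₁,…,Xₙ are i.i.d. on [a,b] with a density bounded below by c > 0 on [a,b],
then E|1/(X̄ - μ)| = ∞, where X̄ is the sample mean and μ = E(X₁). -/
theorem stmt_13 {Ω : Type*} [MeasurableSpace Ω] (P : Measure Ω) [IsProbabilityMeasure P]
    (n : ℕ) (hn : 1 ≤ n) (a b c : ℝ) (hab : a < b) (hc : 0 < c)
    (f : ℝ → ℝ) (hf : ∀ u ∈ Icc a b, c ≤ f u) (hf0 : ∀ u ∉ Icc a b, f u = 0)
    (X : Fin n → Ω → ℝ) (hmeas : ∀ i, Measurable (X i))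
    (hindep : iIndepFun X P)
    (hlaw : ∀ i, Measure.map (X i) P
      = volume.withDensity fun u => ENNReal.ofReal (f u))
    (μ : ℝ) (hμ : μ = ∫ ω, X ⟨0, hn⟩ ω ∂P) :
    ∫⁻ ω, ENNReal.ofReal |1 / ((∑ i, X i ω) / n - μ)| ∂P = ⊤ := by
  classical
  set ν : Measure ℝ := volume.withDensity fun u => ENNReal.ofReal (f u) with hν
  -- lower bound for ν on measurable subsets
  have hν_lb : ∀ s : Set ℝ, MeasurableSet s →
      ENNReal.ofReal c * volume (s ∩ Icc a b) ≤ ν s := by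
    intro s hs
    rw [hν, withDensity_apply _ hs]
    calc ENNReal.ofReal c * volume (s ∩ Icc a b)
        = ∫⁻ x in s ∩ Icc a b, ENNReal.ofReal c ∂volume := by
          rw [setLIntegral_const, mul_comm]
      _ ≤ ∫⁻ x in s ∩ Icc a b, ENNReal.ofReal (f x) ∂volume := by
          refine lintegral_mono_ae ?_
          rw [ae_restrict_iff' (hs.inter measurableSet_Icc)]
          exact Filter.Eventually.of_forall fun x hx =>
            ENNReal.ofReal_le_ofReal (hf x hx.2)
      _ ≤ ∫⁻ x in s, ENNReal.ofReal (f x) ∂volume :=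
          lintegral_mono' (Measure.restrict_mono inter_subset_left le_rfl) le_rfl
  -- ν vanishes outside [a,b]
  have hν_out : ν (Icc a b)ᶜ = 0 := by
    rw [hν, withDensity_apply _ measurableSet_Icc.compl]
    have : ∀ᵐ x ∂(volume.restrict (Icc a b)ᶜ), ENNReal.ofReal (f x) ≤ 0 := by
      rw [ae_restrict_iff' measurableSet_Icc.compl]
      exact Filter.Eventually.of_forall fun x hx => by simp [hf0 x hx]
    refine le_antisymm ?_ zero_le
    calc ∫⁻ x in (Icc a b)ᶜ, ENNReal.ofReal (f x) ∂volume
        ≤ ∫⁻ _ in (Icc a b)ᶜ, 0 ∂volume := lintegral_mono_ae this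
      _ = 0 := lintegral_zero
  -- each X i is in [a,b] a.e.
  have hae : ∀ i, ∀ᵐ ω ∂P, X i ω ∈ Icc a b := by
    intro i
    have : P (X i ⁻¹' (Icc a b)ᶜ) = 0 := by
      rw [← Measure.map_apply (hmeas i) measurableSet_Icc.compl, hlaw i]
      exact hν_out
    filter_upwards [measure_eq_zero_iff_ae_notMem.1 this] with ω hω
    simpa using hω
  -- each X i is integrable
  have hint : ∀ i, Integrable (X i) P := by
    intro i
    refine Integrable.mono' (integrable_const (max |a| |b|))
      (hmeas i).aestronglyMeasurable ?_
    filter_upwards [hae i] with ω hω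
    rw [Real.norm_eq_abs]
    exact abs_le_max_abs_abs hω.1 hω.2
  -- lower bound for hitting probabilities
  have hprob : ∀ (i : Fin n) (u v : ℝ), a ≤ u → v ≤ b →
      ENNReal.ofReal (c * (v - u)) ≤ P (X i ⁻¹' Icc u v) := by
    intro i u v hu hv
    rcases le_or_gt u v with huv | huv
    · have h1 : P (X i ⁻¹' Icc u v) = ν (Icc u v) := by
        rw [← Measure.map_apply (hmeas i) measurableSet_Icc, hlaw i]
      have h2 : Icc u v ∩ Icc a b = Icc u v :=
        inter_eq_self_of_subset_left (Icc_subset_Icc hu hv)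
      have := hν_lb (Icc u v) measurableSet_Icc
      rw [h2, Real.volume_Icc] at this
      rw [h1]
      refine le_trans (le_of_eq ?_) this
      rw [← ENNReal.ofReal_mul hc.le]
    · rw [ENNReal.ofReal_eq_zero.2 (by nlinarith)]
      exact zero_le
  set i0 : Fin n := ⟨0, hn⟩ with hi0
  set Y : Ω → ℝ := X i0 with hY
  have hYint : Integrable Y P := hint i0
  have hμY : μ = ∫ ω, Y ω ∂P := hμ
  -- μ is strictly inside (a, b)
  have hPA_toReal : ∀ (u v : ℝ), a ≤ u → v ≤ b → u < v →
      0 < (P (Y ⁻¹' Icc u v)).toReal := by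
    intro u v hu hv huv
    have h1 := hprob i0 u v hu hv
    have h2 : 0 < ENNReal.ofReal (c * (v - u)) := by
      rw [ENNReal.ofReal_pos]; nlinarith
    exact ENNReal.toReal_pos (h2.trans_le h1).ne' (measure_ne_top P _)
  have hμa : a < μ := by
    set A : Set Ω := Y ⁻¹' Icc ((a + b) / 2) b with hA
    have hAmeas : MeasurableSet A := (hmeas i0) measurableSet_Icc
    have hPA : 0 < (P A).toReal := hPA_toReal _ _ (by linarith) le_rfl (by linarith)
    have hsub : Integrable (fun ω => Y ω - a) P := hYint.sub (integrable_const a)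
    have h1 : ∫ ω in A, (Y ω - a) ∂P ≤ ∫ ω, (Y ω - a) ∂P := by
      refine setIntegral_le_integral hsub ?_
      filter_upwards [hae i0] with ω hω
      simp only [Pi.zero_apply]; linarith [hω.1]
    have h2 : ((a + b) / 2 - a) * (P A).toReal ≤ ∫ ω in A, (Y ω - a) ∂P := by
      refine setIntegral_ge_of_const_le_real hAmeas (measure_ne_top P _) ?_ hsub.integrableOn
      intro ω hω; have : (a + b) / 2 ≤ Y ω := hω.1; linarith
    have h3 : ∫ ω, (Y ω - a) ∂P = μ - a := by
      rw [integral_sub hYint (integrable_const a), integral_const, probReal_univ, ← hμY]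
      simp
    nlinarith
  have hμb : μ < b := by
    set A : Set Ω := Y ⁻¹' Icc a ((a + b) / 2) with hA
    have hAmeas : MeasurableSet A := (hmeas i0) measurableSet_Icc
    have hPA : 0 < (P A).toReal := hPA_toReal _ _ le_rfl (by linarith) (by linarith)
    have hsub : Integrable (fun ω => b - Y ω) P := (integrable_const b).sub hYint
    have h1 : ∫ ω in A, (b - Y ω) ∂P ≤ ∫ ω, (b - Y ω) ∂P := by
      refine setIntegral_le_integral hsub ?_
      filter_upwards [hae i0] with ω hω
      simp only [Pi.zero_apply]; linarith [hω.2]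
    have h2 : (b - (a + b) / 2) * (P A).toReal ≤ ∫ ω in A, (b - Y ω) ∂P := by
      refine setIntegral_ge_of_const_le_real hAmeas (measure_ne_top P _) ?_ hsub.integrableOn
      intro ω hω; have : Y ω ≤ (a + b) / 2 := hω.2; linarith
    have h3 : ∫ ω, (b - Y ω) ∂P = b - μ := by
      rw [integral_sub (integrable_const b) hYint, integral_const, probReal_univ, ← hμY]
      simp
    nlinarith
  -- set up the conditioning construction
  set δ : ℝ := min (μ - a) (b - μ) with hδ
  have hδ_pos : 0 < δ := lt_min (by linarith) (by linarith)
  have hδa : δ ≤ μ - a := min_le_left _ _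
  have hδb : δ ≤ b - μ := min_le_right _ _
  set η : ℝ := δ / (2 * n) with hη
  have hn_pos : (0:ℝ) < n := by exact_mod_cast hn
  have hη_pos : 0 < η := div_pos hδ_pos (by positivity)
  set s : Finset (Fin n) := Finset.univ.erase i0 with hs
  have hi0s : i0 ∉ s := Finset.notMem_erase _ _
  have hcard : (s.card : ℝ) = (n : ℝ) - 1 := by
    rw [hs, Finset.card_erase_of_mem (Finset.mem_univ _), Finset.card_univ,
      Fintype.card_fin]
    push_cast [Nat.cast_sub hn]
    ring
  set T : Ω → ℝ := fun ω => ∑ i ∈ s, X i ω with hT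
  have hT_meas : Measurable T := Finset.measurable_sum _ fun i _ => hmeas i
  have h1n : (1:ℝ) ≤ n := by exact_mod_cast hn
  have hηδ : η ≤ δ / 2 := by
    rw [hη, div_le_div_iff₀ (by positivity) (by norm_num)]
    nlinarith
  have hcn : ((n:ℝ) - 1) * η ≤ δ / 2 := by
    have h2 : ((n:ℝ) - 1) / (2 * n) ≤ 1 / 2 := by
      rw [div_le_div_iff₀ (by positivity) (by norm_num)]
      nlinarith
    calc ((n:ℝ) - 1) * η = δ * (((n:ℝ) - 1) / (2 * n)) := by rw [hη]; ring
      _ ≤ δ * (1 / 2) := by nlinarith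
      _ = δ / 2 := by ring
  set J : Set ℝ := Icc (((n:ℝ) - 1) * μ - δ / 2) (((n:ℝ) - 1) * μ + δ / 2) with hJ
  -- P(T ∈ J) > 0
  have hTJ_pos : 0 < P (T ⁻¹' J) := by
    have hincl : (⋂ i ∈ s, X i ⁻¹' Icc (μ - η) (μ + η)) ⊆ T ⁻¹' J := by
      intro ω hω
      simp only [mem_iInter] at hω
      have hlo : (s.card : ℝ) * (μ - η) ≤ T ω := by
        have := Finset.card_nsmul_le_sum s (fun i => X i ω) (μ - η)
          (fun i hi => (hω i hi).1)
        rwa [nsmul_eq_mul] at this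
      have hhi : T ω ≤ (s.card : ℝ) * (μ + η) := by
        have := Finset.sum_le_card_nsmul s (fun i => X i ω) (μ + η)
          (fun i hi => (hω i hi).2)
        rwa [nsmul_eq_mul] at this
      rw [hcard] at hlo hhi
      constructor
      · nlinarith
      · nlinarith
    have hprod : P (⋂ i ∈ s, X i ⁻¹' Icc (μ - η) (μ + η))
        = ∏ i ∈ s, P (X i ⁻¹' Icc (μ - η) (μ + η)) := by
      refine hindep.meas_biInter fun i hi => ?_
      exact ⟨Icc (μ - η) (μ + η), measurableSet_Icc, rfl⟩
    have hpos : 0 < P (⋂ i ∈ s, X i ⁻¹' Icc (μ - η) (μ + η)) := by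
      rw [hprod, CanonicallyOrderedAdd.prod_pos]
      intro i hi
      refine lt_of_lt_of_le ?_ (hprob i (μ - η) (μ + η) ?_ ?_)
      · rw [ENNReal.ofReal_pos]; nlinarith
      · linarith
      · linarith
    exact hpos.trans_le (measure_mono hincl)
  have hJmeas : MeasurableSet J := measurableSet_Icc
  -- independence of T and Y
  have hY_meas : Measurable Y := hmeas i0
  have hIndepTY : IndepFun T Y P := by
    have h := hindep.indepFun_finsetSum_of_notMem hmeas hi0s
    have hTeq : T = ∑ j ∈ s, X j := by
      funext ω; rw [hT]; simp [Finset.sum_apply]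
    rw [hY, hi0]
    rwa [← hTeq] at h
  have hmapY : P.map Y = ν := by rw [hY]; exact hlaw i0
  have hmap : P.map (fun ω => (T ω, Y ω)) = (P.map T).prod (P.map Y) :=
    (indepFun_iff_map_prod_eq_prod_map_map hT_meas.aemeasurable
      hY_meas.aemeasurable).1 hIndepTY
  haveI : IsProbabilityMeasure (P.map T) :=
    Measure.isProbabilityMeasure_map hT_meas.aemeasurable
  haveI : IsProbabilityMeasure (P.map Y) :=
    Measure.isProbabilityMeasure_map hY_meas.aemeasurable
  set g : ℝ → ℝ≥0∞ := fun z => ENNReal.ofReal |1 / (z / n - μ)| with hg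
  have hg_meas : Measurable g := by
    simp only [hg, one_div]
    exact (((measurable_id.div_const _).sub_const _).inv.abs).ennreal_ofReal
  set F : ℝ × ℝ → ℝ≥0∞ :=
    fun p => J.indicator (fun _ => (1:ℝ≥0∞)) p.1 * g (p.2 + p.1) with hF
  have hF_meas : Measurable F := by
    refine Measurable.mul ?_ (hg_meas.comp (measurable_snd.add measurable_fst))
    exact (measurable_const.indicator hJmeas).comp measurable_fst
  -- lower bound measure for the law of Y
  have hκ : (ENNReal.ofReal c) • (volume.restrict (Icc a b)) ≤ P.map Y := by
    rw [hmapY]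
    refine Measure.le_iff.2 fun s' hs' => ?_
    rw [Measure.smul_apply, Measure.restrict_apply hs', smul_eq_mul]
    exact hν_lb s' hs'
  have key : ∫⁻ ω, F (T ω, Y ω) ∂P = ⊤ := by
    have hstep : ∫⁻ ω, F (T ω, Y ω) ∂P
        = ∫⁻ t, ∫⁻ y, F (t, y) ∂(P.map Y) ∂(P.map T) := by
      rw [← lintegral_map hF_meas (hT_meas.prodMk hY_meas), hmap,
        lintegral_prod _ hF_meas.aemeasurable]
    have hinner : ∀ t ∈ J, (∫⁻ y, F (t, y) ∂(P.map Y)) = ⊤ := by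
      intro t ht
      have hFt : ∀ y, F (t, y) = g (y + t) := by
        intro y; simp only [hF, indicator_of_mem ht, one_mul]
      simp_rw [hFt]
      have hpa : a ≤ (n:ℝ) * μ - t := by
        have h1 : t ≤ ((n:ℝ) - 1) * μ + δ / 2 := ht.2
        linarith
      have hpb : (n:ℝ) * μ - t ≤ b := by
        have h1 : ((n:ℝ) - 1) * μ - δ / 2 ≤ t := ht.1
        linarith
      have hbound : ∫⁻ y in Icc a b,
          ENNReal.ofReal |1 / (y - ((n:ℝ) * μ - t))| ∂volume = ⊤ :=
        aux_lintegral_sub_inv_top hab ⟨hpa, hpb⟩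
      have hmono : ∀ y : ℝ,
          ENNReal.ofReal |1 / (y - ((n:ℝ) * μ - t))| ≤ g (y + t) := by
        intro y
        have h1 : (y + t) / (n:ℝ) - μ = (y - ((n:ℝ) * μ - t)) / n := by
          field_simp
          ring
        have h2 : g (y + t)
            = ENNReal.ofReal |(n:ℝ) / (y - ((n:ℝ) * μ - t))| := by
          simp only [hg]
          rw [h1, one_div_div]
        rw [h2]
        exact ENNReal.ofReal_le_ofReal (aux_abs_one_div_le h1n)
      refine top_unique ?_
      calc (⊤:ℝ≥0∞)
          = ENNReal.ofReal c * ∫⁻ y in Icc a b,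
              ENNReal.ofReal |1 / (y - ((n:ℝ) * μ - t))| ∂volume := by
            rw [hbound, ENNReal.mul_top]
            rw [Ne, ENNReal.ofReal_eq_zero]
            push_neg
            exact hc
        _ = ∫⁻ y, ENNReal.ofReal |1 / (y - ((n:ℝ) * μ - t))|
              ∂((ENNReal.ofReal c) • volume.restrict (Icc a b)) := by
            rw [lintegral_smul_measure, smul_eq_mul]
        _ ≤ ∫⁻ y, ENNReal.ofReal |1 / (y - ((n:ℝ) * μ - t))| ∂(P.map Y) :=
            lintegral_mono' hκ le_rfl
        _ ≤ ∫⁻ y, g (y + t) ∂(P.map Y) := lintegral_mono hmono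
    rw [hstep]
    refine top_unique ?_
    have hsub : ∫⁻ t in J, (∫⁻ y, F (t, y) ∂(P.map Y)) ∂(P.map T) = ⊤ := by
      rw [setLIntegral_congr_fun hJmeas
        (fun t ht => hinner t ht)]
      rw [setLIntegral_const]
      rw [Measure.map_apply hT_meas hJmeas]
      exact ENNReal.top_mul hTJ_pos.ne'
    calc (⊤:ℝ≥0∞) = ∫⁻ t in J, (∫⁻ y, F (t, y) ∂(P.map Y)) ∂(P.map T) :=
          hsub.symm
      _ ≤ ∫⁻ t, (∫⁻ y, F (t, y) ∂(P.map Y)) ∂(P.map T) :=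
          setLIntegral_le_lintegral _ _
  have hfinal : ∀ ω, F (T ω, Y ω) ≤ ENNReal.ofReal |1 / ((∑ i, X i ω) / n - μ)| := by
    intro ω
    rw [hF]
    by_cases hω : T ω ∈ J
    · simp only [indicator_of_mem hω, one_mul]
      have hsum : Y ω + T ω = ∑ i, X i ω := by
        rw [hY, hT, hs]
        exact Finset.add_sum_erase Finset.univ (fun i => X i ω) (Finset.mem_univ i0)
      rw [hsum]
    · simp only [indicator_of_notMem hω, zero_mul]
      exact zero_le
  refine top_unique ?_
  calc (⊤:ℝ≥0∞) = ∫⁻ ω, F (T ω, Y ω) ∂P := key.symm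
    _ ≤ _ := lintegral_mono hfinal
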